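/- (Inequality for subdifferential trajectories.) Let Π be proper convex lsc on ℝ^m with Int(D(∂Π)) ≠ ∅ and fix a ∈ Int(D(∂Π)). Then there exist constants λ₁ > 0 and λ₂, λ₃ ≥ 0 such that for every continuous x : [0,T] → cl(D(∂Π)) and every k of bounded variation with k(0)=0 satisfying ⟨x(t) − α, dk(t) − β dt⟩ ≥ 0 for all (α, β) with β ∈ ∂Π(α), one has ∫_s^t ⟨x(r) − a, dk(r)⟩ ≥ λ₁·(variation of k on [s,t]) − λ₂ ∫_s^t |x(r) − a| dr − λ₃ (t − s) for all 0 ≤ s ≤ t ≤ T. -/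

import Mathlib

open MeasureTheory Set
open scoped RealInnerProductSpace

/-- The convex subdifferential of a real-valued function on `ℝ^m`. -/
def subdiff {m : ℕ} (f : EuclideanSpace ℝ (Fin m) → ℝ) (x : EuclideanSpace ℝ (Fin m)) :
    Set (EuclideanSpace ℝ (Fin m)) :=
  {u | ∀ v, ⟪u, v - x⟫ + f x ≤ f v}

/-- Inequality for subdifferential trajectories: `k(t) = ∫_0^t U(r) dr` has density `U`,
its total variation on `[s,t]` is `∫_s^t ‖U(r)‖ dr`, and `dk(t) ∈ ∂Π(x(t)) dt` is expressed
by `⟨x(t) − α, U(t) − β⟩ ≥ 0` for every `(α, β)` in the graph of `∂Π`. -/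
theorem stmt15 {m : ℕ} (Φ : EuclideanSpace ℝ (Fin m) → ℝ)
    (hconv : ConvexOn ℝ Set.univ Φ) (hlsc : LowerSemicontinuous Φ)
    (h0 : Φ 0 = 0) (hpos : ∀ x, 0 ≤ Φ x)
    (hint : (interior {x | (subdiff Φ x).Nonempty}).Nonempty)
    (a : EuclideanSpace ℝ (Fin m)) (ha : a ∈ interior {x | (subdiff Φ x).Nonempty})
    (T : ℝ) (hT : 0 ≤ T) :
    ∃ l₁ > (0 : ℝ), ∃ l₂ ≥ (0 : ℝ), ∃ l₃ ≥ (0 : ℝ),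
      ∀ (x U : ℝ → EuclideanSpace ℝ (Fin m)),
        Continuous x →
        (∀ t ∈ Icc (0 : ℝ) T, x t ∈ closure {y | (subdiff Φ y).Nonempty}) →
        IntervalIntegrable U volume 0 T →
        (∀ α β, β ∈ subdiff Φ α → ∀ t ∈ Icc (0 : ℝ) T, 0 ≤ ⟪x t - α, U t - β⟫) →
        ∀ s t, 0 ≤ s → s ≤ t → t ≤ T →
          l₁ * (∫ r in s..t, ‖U r‖) - l₂ * (∫ r in s..t, ‖x r - a‖) - l₃ * (t - s)
            ≤ ∫ r in s..t, ⟪x r - a, U r⟫ := by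
  have hcont : Continuous Φ := by
    rw [← continuousOn_univ]
    exact hconv.continuousOn isOpen_univ
  obtain ⟨r, hr, hball⟩ := Metric.mem_nhds_iff.mp (mem_interior_iff_mem_nhds.mp ha)
  set ρ := r / 2 with hρdef
  have hρ : 0 < ρ := by positivity
  have hρr : ρ < r := by simp [hρdef]; linarith
  obtain ⟨z, hz, hMz⟩ := (isCompact_closedBall a (ρ + 1)).exists_isMaxOn
      ⟨a, by simp; positivity⟩ hcont.continuousOn
  set M := Φ z with hMdef
  have hM0 : 0 ≤ M := hpos z
  refine ⟨ρ, hρ, M, hM0, ρ * M, by positivity, ?_⟩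
  intro x U hx hxcl hU hmono s t hs hst htT
  -- key pointwise inequality
  have key : ∀ τ ∈ Icc s t, ρ * ‖U τ‖ - M * ‖x τ - a‖ - ρ * M ≤ ⟪x τ - a, U τ⟫ := by
    intro τ hτ
    have hτ' : τ ∈ Icc (0 : ℝ) T := ⟨le_trans hs hτ.1, le_trans hτ.2 htT⟩
    by_cases hu : U τ = 0
    · simp only [hu, norm_zero, mul_zero, inner_zero_right, zero_sub]
      nlinarith [norm_nonneg (x τ - a)]
    · set e : EuclideanSpace ℝ (Fin m) := ‖U τ‖⁻¹ • U τ with he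
      have hunorm : (0:ℝ) < ‖U τ‖ := norm_pos_iff.mpr hu
      have hne : ‖e‖ = 1 := by
        rw [he, norm_smul, norm_inv, norm_norm, inv_mul_cancel₀ (ne_of_gt hunorm)]
      have hα : a + ρ • e ∈ Metric.ball a r := by
        simp only [Metric.mem_ball, dist_eq_norm, add_sub_cancel_left, norm_smul, hne,
          Real.norm_eq_abs, abs_of_pos hρ, mul_one]
        exact hρr
      obtain ⟨β, hβ⟩ := hball hα
      have hβM : ‖β‖ ≤ M := by
        by_cases hb : β = 0
        · simp [hb, hM0]
        · have hbn : (0:ℝ) < ‖β‖ := norm_pos_iff.mpr hb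
          have h1 := hβ (a + ρ • e + ‖β‖⁻¹ • β)
          have h2 : ⟪β, (a + ρ • e + ‖β‖⁻¹ • β) - (a + ρ • e)⟫ = ‖β‖ := by
            rw [add_sub_cancel_left, real_inner_smul_right, real_inner_self_eq_norm_sq]
            field_simp
          rw [h2] at h1
          have h3 : Φ (a + ρ • e + ‖β‖⁻¹ • β) ≤ M := by
            apply hMz
            simp only [Metric.mem_closedBall, dist_eq_norm]
            calc ‖a + ρ • e + ‖β‖⁻¹ • β - a‖ = ‖ρ • e + ‖β‖⁻¹ • β‖ := by
                  congr 1; abel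
              _ ≤ ‖ρ • e‖ + ‖‖β‖⁻¹ • β‖ := norm_add_le _ _
              _ = ρ + 1 := by
                  rw [norm_smul ρ e, norm_smul (‖β‖⁻¹) β, hne, norm_inv, norm_norm,
                    inv_mul_cancel₀ (ne_of_gt hbn), Real.norm_eq_abs, abs_of_pos hρ, mul_one]
          nlinarith [hpos (a + ρ • e)]
      have h1 := hmono (a + ρ • e) β hβ τ hτ'
      have hexp : x τ - (a + ρ • e) = (x τ - a) - ρ • e := by abel
      rw [hexp, inner_sub_left, inner_sub_right, inner_sub_right] at h1
      have heu : ⟪e, U τ⟫ = ‖U τ‖ := by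
        rw [he, real_inner_smul_left, real_inner_self_eq_norm_sq]
        field_simp
      have hre : ⟪ρ • e, U τ⟫ = ρ * ‖U τ‖ := by
        rw [real_inner_smul_left, heu]
      have hrb : ⟪ρ • e, β⟫ ≤ ρ * M := by
        rw [real_inner_smul_left]
        have := real_inner_le_norm e β
        rw [hne, one_mul] at this
        nlinarith
      have hvb : -(‖x τ - a‖ * M) ≤ ⟪x τ - a, β⟫ := by
        have h4 := abs_real_inner_le_norm (x τ - a) β
        have h5 : ‖x τ - a‖ * ‖β‖ ≤ ‖x τ - a‖ * M := by
          apply mul_le_mul_of_nonneg_left hβM (norm_nonneg _)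
        nlinarith [abs_le.mp h4]
      nlinarith [h1, hre, hrb, hvb]
  -- integrability
  have hsub : Set.uIcc s t ⊆ Set.uIcc (0 : ℝ) T := by
    rw [uIcc_of_le hst, uIcc_of_le hT]
    exact Icc_subset_Icc hs htT
  have hUs : IntervalIntegrable U volume s t := hU.mono_set hsub
  have hUn : IntervalIntegrable (fun r => ‖U r‖) volume s t := hUs.norm
  have hxc : IntervalIntegrable (fun r => ‖x r - a‖) volume s t :=
    ((hx.sub continuous_const).norm).intervalIntegrable s t
  have hlhs : IntervalIntegrable
      (fun r => ρ * ‖U r‖ - M * ‖x r - a‖ - ρ * M) volume s t :=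
    ((hUn.const_mul ρ).sub (hxc.const_mul M)).sub (intervalIntegrable_const)
  -- integrability of the inner product
  obtain ⟨C, hC⟩ : ∃ C, ∀ p ∈ Set.uIcc s t, ‖x p - a‖ ≤ C := by
    obtain ⟨z', _, hz'⟩ := (isCompact_uIcc (a := s) (b := t)).exists_isMaxOn
      (nonempty_uIcc) ((hx.sub continuous_const).norm).continuousOn
    exact ⟨‖x z' - a‖, hz'⟩
  have hinner : IntervalIntegrable (fun r => ⟪x r - a, U r⟫) volume s t := by
    refine (hUn.const_mul C).mono_fun' ?_ ?_
    · rw [uIoc_of_le hst]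
      exact AEStronglyMeasurable.inner
        ((hx.sub continuous_const).aestronglyMeasurable.restrict)
        hUs.aestronglyMeasurable
    · have hmeas : MeasurableSet (Set.uIoc s t) := measurableSet_uIoc
      rw [Filter.EventuallyLE, ae_restrict_iff' hmeas]
      apply Filter.Eventually.of_forall
      intro p hp
      have hp' : p ∈ Set.uIcc s t := uIoc_subset_uIcc hp
      calc ‖⟪x p - a, U p⟫‖ ≤ ‖x p - a‖ * ‖U p‖ := by
            rw [Real.norm_eq_abs]; exact abs_real_inner_le_norm _ _
        _ ≤ C * ‖U p‖ := by
            apply mul_le_mul_of_nonneg_right (hC p hp') (norm_nonneg _)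
  have hmono' := intervalIntegral.integral_mono_on hst hlhs hinner key
  calc ρ * (∫ r in s..t, ‖U r‖) - M * (∫ r in s..t, ‖x r - a‖) - ρ * M * (t - s)
      = ∫ r in s..t, (ρ * ‖U r‖ - M * ‖x r - a‖ - ρ * M) := by
        rw [intervalIntegral.integral_sub ((hUn.const_mul ρ).sub (hxc.const_mul M))
          intervalIntegrable_const,
          intervalIntegral.integral_sub (hUn.const_mul ρ) (hxc.const_mul M),
          intervalIntegral.integral_const_mul, intervalIntegral.integral_const_mul,
          intervalIntegral.integral_const, smul_eq_mul]
        ring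
    _ ≤ ∫ r in s..t, ⟪x r - a, U r⟫ := hmono'
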